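/- Let k > 1 and let f : ℝ → ℝ be a positive, continuously differentiable function with f(0) > k. Suppose R* is the unique point of (0, (k−1)/k) satisfying f(R*) = (k−1)/((k−1)/k − R*), let I* = R*/(k−1), and suppose f'(R*) ≠ g'(R*) where g(R) = (k−1)/((k−1)/k − R). Then for every pair of differentiable functions I, R : ℝ → ℝ satisfying, for all t ≥ 0, I'(t) = I(t)·(f(R(t))·(1 − I(t) − R(t)) − k) and R'(t) = (k−1)·I(t) − R(t), with I(0) > 0, R(0) ≥ 0 and I(0) + R(0) ≤ 1, one has (I(t), R(t)) → (I*, R*) as t → ∞. -/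

import Mathlib

open Set

/-- Master algebraic identity behind the Goh--Lyapunov function. -/
lemma sir_master_id (k Rs y F x : ℝ) :
    4*F*((k-1)*((k-1)*x-Rs)*(F*(1-x-y)-k)
        + (F*((k+1)*(y-Rs)-(k-1)+k*Rs)+k*(k-1))*((k-1)*x-y))
      = -(2*F*((k-1)*x-Rs) - (((k-1)-k*Rs)*F-k*(k-1)-(k-1)*F*(y-Rs)
            + (F*((k+1)*(y-Rs)-(k-1)+k*Rs)+k*(k-1))))^2
        - 4*F*(y-Rs)*(k*(k-1)-F*((k-1)-k*y)) := by ring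

/-- Functions with zero derivative on `[0,∞)` are constant there. -/
lemma constOn_Ici {G : ℝ → ℝ} (h : ∀ t, 0 ≤ t → HasDerivAt G 0 t)
    {t : ℝ} (ht : 0 ≤ t) : G t = G 0 := by
  rcases eq_or_lt_of_le ht with rfl | ht'
  · rfl
  · exact constant_of_has_deriv_right_zero
      (fun x hx => (h x hx.1).continuousAt.continuousWithinAt)
      (fun x hx => (h x hx.1).hasDerivWithinAt) t ⟨ht, le_refl t⟩

/-- Monotonicity on `[0,∞)` from a nonnegative derivative. -/
lemma monoOn_Ici {G g : ℝ → ℝ} (h : ∀ t, 0 ≤ t → HasDerivAt G (g t) t)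
    (hg : ∀ t, 0 ≤ t → 0 ≤ g t) : MonotoneOn G (Set.Ici 0) := by
  apply monotoneOn_of_deriv_nonneg (convex_Ici 0)
    (fun x hx => (h x hx).continuousAt.continuousWithinAt)
  · rw [interior_Ici]
    exact fun x hx => ((h x (le_of_lt hx)).differentiableAt).differentiableWithinAt
  · rw [interior_Ici]
    intro x hx
    rw [(h x (le_of_lt hx)).deriv]
    exact hg x (le_of_lt hx)

/-- Antitonicity on `[0,∞)` from a nonpositive derivative. -/
lemma antiOn_Ici {G g : ℝ → ℝ} (h : ∀ t, 0 ≤ t → HasDerivAt G (g t) t)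
    (hg : ∀ t, 0 ≤ t → g t ≤ 0) : AntitoneOn G (Set.Ici 0) := by
  apply antitoneOn_of_deriv_nonpos (convex_Ici 0)
    (fun x hx => (h x hx).continuousAt.continuousWithinAt)
  · rw [interior_Ici]
    exact fun x hx => ((h x (le_of_lt hx)).differentiableAt).differentiableWithinAt
  · rw [interior_Ici]
    intro x hx
    rw [(h x (le_of_lt hx)).deriv]
    exact hg x (le_of_lt hx)

set_option maxHeartbeats 4000000 in
/-- Global stability of a unique endemic equilibrium: if f(0) > k, the endemic
equilibrium (I*, R*) is unique and f'(R*) ≠ g'(R*), then every solution with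
I(0) > 0 converges to (I*, R*). -/
theorem sir_endemic_equilibrium_globally_stable
    (k : ℝ) (hk : 1 < k)
    (f : ℝ → ℝ) (hf_pos : ∀ x, 0 < f x) (hf_smooth : ContDiff ℝ 1 f)
    (hf0 : k < f 0)
    (g : ℝ → ℝ) (hg : ∀ R, g R = (k - 1) / ((k - 1) / k - R))
    (Rstar : ℝ) (hRstar : Rstar ∈ Set.Ioo (0 : ℝ) ((k - 1) / k))
    (hfg : f Rstar = g Rstar)
    (huniq : ∀ R' ∈ Set.Ioo (0 : ℝ) ((k - 1) / k), f R' = g R' → R' = Rstar)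
    (Istar : ℝ) (hIstar : Istar = Rstar / (k - 1))
    (hderiv_ne : deriv f Rstar ≠ deriv g Rstar)
    (I R : ℝ → ℝ)
    (hI : Differentiable ℝ I) (hR : Differentiable ℝ R)
    (hIode : ∀ t, 0 ≤ t → deriv I t = I t * (f (R t) * (1 - I t - R t) - k))
    (hRode : ∀ t, 0 ≤ t → deriv R t = (k - 1) * I t - R t)
    (hI0 : 0 < I 0) (hR0 : 0 ≤ R 0) (hsum : I 0 + R 0 ≤ 1) :
    Filter.Tendsto (fun t => (I t, R t)) Filter.atTop (nhds (Istar, Rstar)) := by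
  obtain ⟨hRs0, hRsd⟩ := hRstar
  have hk1 : (0:ℝ) < k - 1 := by linarith
  have hk0 : (0:ℝ) < k := by linarith
  have hdRs : 0 < (k-1) - k*Rstar := by
    rw [lt_div_iff₀ hk0] at hRsd; linarith
  have hIs0 : 0 < Istar := by rw [hIstar]; positivity
  have hfsEq : f Rstar * ((k-1) - k*Rstar) = k*(k-1) := by
    have h1 : f Rstar = (k-1)/((k-1)/k - Rstar) := by rw [hfg, hg]
    have h2 : (k-1)/k - Rstar ≠ 0 := by
      have : 0 < (k-1)/k - Rstar := by linarith [hRsd]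
      exact ne_of_gt this
    rw [h1]; field_simp
  have hfC : Continuous f := hf_smooth.continuous
  have hIC : Continuous I := hI.continuous
  have hRC : Continuous R := hR.continuous
  -- ### Sign lemma: the uniqueness hypothesis forces f ≷ g on the two sides of R*.
  have fgzero : ∀ z, 0 < z → z < (k-1)/k → f z * ((k-1) - k*z) = k*(k-1) → z = Rstar := by
    intro z hz0 hzd hz
    apply huniq z ⟨hz0, hzd⟩
    rw [hg]
    have hkz : (k-1)/k - z ≠ 0 := ne_of_gt (by linarith)
    rw [eq_div_iff hkz]
    field_simp
    linear_combination hz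
  have signlem : ∀ y, 0 ≤ y → y ≠ Rstar →
      0 < (y - Rstar) * (k*(k-1) - f y * ((k-1) - k*y)) := by
    intro y hy hne
    have hcont : Continuous (fun z => f z * ((k-1) - k*z) - k*(k-1)) :=
      (hfC.mul ((continuous_const.sub (continuous_const.mul continuous_id)))).sub
        continuous_const
    rcases lt_or_gt_of_ne hne with hlt | hgt
    · -- y < Rstar : show  k(k-1) < f y ((k-1) - k y)
      have key : k*(k-1) < f y * ((k-1) - k*y) := by
        by_contra hcon
        push_neg at hcon
        have h0pos : (0:ℝ) < f 0 * ((k-1) - k*0) - k*(k-1) := by nlinarith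
        have hyneg : f y * ((k-1) - k*y) - k*(k-1) ≤ 0 := by linarith
        have hsub := intermediate_value_Icc' hy hcont.continuousOn
        have h0mem : (0:ℝ) ∈ Icc (f y * ((k-1)-k*y) - k*(k-1)) (f 0*((k-1)-k*0) - k*(k-1)) :=
          ⟨hyneg, h0pos.le⟩
        obtain ⟨z, hz, hz0⟩ := hsub h0mem
        have hz0' : f z * ((k-1) - k*z) = k*(k-1) := by
          have : f z * ((k-1) - k*z) - k*(k-1) = 0 := hz0
          linarith
        have hzpos : 0 < z := by
          rcases eq_or_lt_of_le hz.1 with hz1 | h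
          · exfalso; rw [← hz1] at hz0'; nlinarith
          · exact h
        have hzd : z < (k-1)/k := by
          have h1 : z ≤ y := hz.2
          have := hRsd
          linarith
        have := fgzero z hzpos hzd hz0'
        have : z < Rstar := lt_of_le_of_lt hz.2 hlt
        linarith
      nlinarith
    · -- y > Rstar
      have key : f y * ((k-1) - k*y) < k*(k-1) := by
        rcases le_or_gt ((k-1)/k) y with hge | hlt2
        · have h1 : (k-1) - k*y ≤ 0 := by
            rw [div_le_iff₀ hk0] at hge; linarith
          nlinarith [hf_pos y]
        · by_contra hcon
          push_neg at hcon
          obtain ⟨B, hB⟩ := (isCompact_Icc : IsCompact (Icc y ((k-1)/k))).exists_bound_of_continuousOn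
            hfC.continuousOn
          have hfyB : f y ≤ B := by
            have := hB y ⟨le_refl y, hlt2.le⟩
            rw [Real.norm_eq_abs] at this
            exact (le_abs_self _).trans this
          have hB0 : 0 < B := lt_of_lt_of_le (hf_pos y) hfyB
          set y1 : ℝ := max y ((k-1)/k - (k-1)/(k*(B+1))) with hy1def
          have hy1lt : y1 < (k-1)/k := by
            apply max_lt hlt2
            have : 0 < (k-1)/(k*(B+1)) := by positivity
            linarith
          have hy1ge : y ≤ y1 := le_max_left _ _
          have hy1small : f y1 * ((k-1) - k*y1) - k*(k-1) < 0 := by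
            have hf1 : f y1 ≤ B := by
              have := hB y1 ⟨hy1ge, hy1lt.le⟩
              rw [Real.norm_eq_abs] at this
              exact (le_abs_self _).trans this
            have h2 : (k-1) - k*y1 ≤ (k-1)/(B+1) := by
              have h3 : (k-1)/k - (k-1)/(k*(B+1)) ≤ y1 := le_max_right _ _
              have h4 : k*((k-1)/k - (k-1)/(k*(B+1))) ≤ k*y1 :=
                mul_le_mul_of_nonneg_left h3 hk0.le
              have h5 : k*((k-1)/k - (k-1)/(k*(B+1))) = (k-1) - (k-1)/(B+1) := by
                field_simp
              linarith
            have hpos1 : 0 < (k-1) - k*y1 := by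
              rw [lt_div_iff₀ hk0] at hy1lt; nlinarith
            have h6 : f y1 * ((k-1) - k*y1) ≤ B * ((k-1)/(B+1)) :=
              mul_le_mul hf1 h2 hpos1.le hB0.le
            have h7 : B * ((k-1)/(B+1)) < k*(k-1) := by
              rw [mul_div_assoc', div_lt_iff₀ (by positivity : (0:ℝ) < B + 1)]
              nlinarith [mul_pos (mul_pos hk1 hk1) hB0, mul_pos hk0 hk1]
            linarith
          have hyy1 : y ≤ y1 := hy1ge
          have hsub := intermediate_value_Icc' hyy1 hcont.continuousOn
          have h0mem : (0:ℝ) ∈ Icc (f y1 * ((k-1)-k*y1) - k*(k-1)) (f y*((k-1)-k*y) - k*(k-1)) :=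
            ⟨hy1small.le, by linarith⟩
          obtain ⟨z, hz, hz0⟩ := hsub h0mem
          have hz0' : f z * ((k-1) - k*z) = k*(k-1) := by
            have : f z * ((k-1) - k*z) - k*(k-1) = 0 := hz0
            linarith
          have hzpos : 0 < z := by
            have : Rstar < y := hgt
            have : y ≤ z := hz.1
            linarith
          have hzd : z < (k-1)/k := lt_of_le_of_lt hz.2 hy1lt
          have hzR := fgzero z hzpos hzd hz0'
          have : Rstar < z := lt_of_lt_of_le hgt hz.1
          linarith
      nlinarith
  have signlem' : ∀ y, 0 ≤ y →
      0 ≤ (y - Rstar) * (k*(k-1) - f y * ((k-1) - k*y)) := by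
    intro y hy
    rcases eq_or_ne y Rstar with rfl | hne
    · simp
    · exact (signlem y hy hne).le
  -- ### The Lyapunov function.
  set φh : ℝ → ℝ := fun y => f y*((k+1)*(y-Rstar)-(k-1)+k*Rstar)+k*(k-1) with hφh
  have hφcont : Continuous φh := by
    apply Continuous.add _ continuous_const
    exact hfC.mul ((((continuous_const.mul (continuous_id.sub continuous_const)).sub
      continuous_const).add continuous_const))
  set Φ : ℝ → ℝ := fun y => ∫ s in Rstar..y, φh s with hΦ
  set L : ℝ → ℝ := fun x => (k-1)^2*(x - Istar - Istar*Real.log x + Istar*Real.log Istar) with hL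
  set VD : ℝ → ℝ → ℝ :=
    fun x y => (k-1)*((k-1)*x-Rstar)*(f y*(1-x-y)-k) + φh y*((k-1)*x-y) with hVD
  set v : ℝ → ℝ := fun t => L (I t) + Φ (R t) with hv
  -- ### Invariance of the domain.
  have hIpos : ∀ t, 0 ≤ t → 0 < I t := by
    have h1c : Continuous (fun s => f (R s) * (1 - I s - R s) - k) :=
      ((hfC.comp hRC).mul ((continuous_const.sub hIC).sub hRC)).sub continuous_const
    set H : ℝ → ℝ := fun t => ∫ s in (0:ℝ)..t, (f (R s) * (1 - I s - R s) - k) with hH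
    have hHd : ∀ t, HasDerivAt H (f (R t) * (1 - I t - R t) - k) t :=
      fun t => (h1c.integral_hasStrictDerivAt 0 t).hasDerivAt
    intro t ht
    have hkey : I t * Real.exp (-(H t)) = I 0 * Real.exp (-(H 0)) := by
      apply constOn_Ici (G := fun u => I u * Real.exp (-(H u))) _ ht
      intro s hs
      have hd := ((hI s).hasDerivAt.mul (((hHd s).neg).exp))
      rw [hIode s hs] at hd
      exact hd.congr_deriv (by ring)
    have h3 : H 0 = 0 := intervalIntegral.integral_same
    rw [h3] at hkey
    simp only [neg_zero, Real.exp_zero, mul_one] at hkey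
    nlinarith [Real.exp_pos (-(H t)), hI0]
  have hRpos : ∀ t, 0 ≤ t → 0 ≤ R t := by
    have hmono : MonotoneOn (fun u => R u * Real.exp u) (Set.Ici 0) := by
      apply monoOn_Ici (g := fun s => Real.exp s * ((k-1) * I s))
      · intro s hs
        have hd := (hR s).hasDerivAt.mul (Real.hasDerivAt_exp s)
        rw [hRode s hs] at hd
        exact hd.congr_deriv (by ring)
      · intro s hs
        have := hIpos s hs
        positivity
    intro t ht
    have h1 : R 0 * Real.exp 0 ≤ R t * Real.exp t :=
      hmono Set.self_mem_Ici (Set.mem_Ici.mpr ht) ht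
    simp only [Real.exp_zero, mul_one] at h1
    nlinarith [Real.exp_pos t, hR0]
  have hSpos : ∀ t, 0 ≤ t → 0 ≤ 1 - I t - R t := by
    have h2c : Continuous (fun s => f (R s) * I s) := (hfC.comp hRC).mul hIC
    set P : ℝ → ℝ := fun u => ∫ s in (0:ℝ)..u, f (R s) * I s with hP
    have hPd : ∀ u, HasDerivAt P (f (R u) * I u) u :=
      fun u => (h2c.integral_hasStrictDerivAt 0 u).hasDerivAt
    have hmono : MonotoneOn (fun u => (1 - I u - R u) * Real.exp (P u)) (Set.Ici 0) := by
      apply monoOn_Ici (g := fun s => Real.exp (P s) * (I s + R s))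
      · intro s hs
        have hdS : HasDerivAt (fun u => 1 - I u - R u) (0 - deriv I s - deriv R s) s :=
          ((hasDerivAt_const s (1:ℝ)).sub (hI s).hasDerivAt).sub (hR s).hasDerivAt
        have hd := hdS.mul ((hPd s).exp)
        rw [hIode s hs, hRode s hs] at hd
        exact hd.congr_deriv (by ring)
      · intro s hs
        have h1 := hIpos s hs
        have h2 := hRpos s hs
        positivity
    intro t ht
    have h3 : (1 - I 0 - R 0) * Real.exp (P 0) ≤ (1 - I t - R t) * Real.exp (P t) :=
      hmono Set.self_mem_Ici (Set.mem_Ici.mpr ht) ht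
    have h4 : P 0 = 0 := intervalIntegral.integral_same
    rw [h4] at h3
    simp only [Real.exp_zero, mul_one] at h3
    nlinarith [Real.exp_pos (P t), hsum]
  have hIle1 : ∀ t, 0 ≤ t → I t ≤ 1 := by
    intro t ht; have := hSpos t ht; have := hRpos t ht; linarith
  have hRle1 : ∀ t, 0 ≤ t → R t ≤ 1 := by
    intro t ht; have := hSpos t ht; have := (hIpos t ht); linarith
  -- ### Derivative of the Lyapunov function along the flow.
  have hΦd : ∀ y : ℝ, HasDerivAt Φ (φh y) y :=
    fun y => (hφcont.integral_hasStrictDerivAt Rstar y).hasDerivAt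
  have hLd : ∀ x : ℝ, 0 < x → HasDerivAt L ((k-1)^2*(1 - Istar/x)) x := by
    intro x hx
    have hlog := (Real.hasDerivAt_log (ne_of_gt hx)).const_mul Istar
    have h2 := ((hasDerivAt_id x).sub_const Istar).sub hlog
    have h3 := h2.add_const (Istar*Real.log Istar)
    have h4 := h3.const_mul ((k-1)^2)
    have h5 : (k-1)^2*(1 - Istar/x) = (k-1)^2 * (1 - Istar*x⁻¹) := by ring
    rw [h5]
    exact h4
  have hvd : ∀ t, 0 ≤ t → HasDerivAt v (VD (I t) (R t)) t := by
    intro t ht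
    have hIt := hIpos t ht
    have hdI := (hLd (I t) hIt).comp t (hI t).hasDerivAt
    have hdR := (hΦd (R t)).comp t (hR t).hasDerivAt
    have hsum2 := hdI.add hdR
    rw [hIode t ht, hRode t ht] at hsum2
    refine hsum2.congr_deriv ?_
    simp only [hVD, hφh]
    rw [hIstar]
    have hne : I t ≠ 0 := ne_of_gt hIt
    field_simp
  -- ### Master inequality.
  have hVDle : ∀ x y, VD x y ≤ -((y-Rstar)*(k*(k-1) - f y*((k-1)-k*y))) := by
    intro x y
    have hid := sir_master_id k Rstar y (f y) x
    have hF := hf_pos y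
    simp only [hVD, hφh]
    nlinarith [hid, hF, sq_nonneg (2*(f y)*((k-1)*x-Rstar) -
      (((k-1)-k*Rstar)*(f y)-k*(k-1)-(k-1)*(f y)*(y-Rstar) +
        ((f y)*((k+1)*(y-Rstar)-(k-1)+k*Rstar)+k*(k-1))))]
  have hVDnonpos : ∀ x y, 0 ≤ y → VD x y ≤ 0 := by
    intro x y hy
    have := hVDle x y
    have := signlem' y hy
    linarith
  have hVDneg : ∀ x y, 0 ≤ y → ¬(x = Istar ∧ y = Rstar) → VD x y < 0 := by
    intro x y hy hnem
    rcases eq_or_ne y Rstar with heq | hyR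
    · have hxI : x ≠ Istar := fun h => hnem ⟨h, heq⟩
      have hu : (k-1)*x - Rstar ≠ 0 := by
        intro h
        apply hxI
        rw [hIstar, eq_div_iff (ne_of_gt hk1)]
        linarith
      rw [heq]
      have hid := sir_master_id k Rstar Rstar (f Rstar) x
      have hF := hf_pos Rstar
      have hu2 : 0 < ((k-1)*x - Rstar)^2 := by positivity
      simp only [hVD, hφh]
      nlinarith [hid, hF, hu2, mul_pos hF hu2, mul_pos (mul_pos hF hF) hu2]
    · calc VD x y ≤ -((y-Rstar)*(k*(k-1) - f y*((k-1)-k*y))) := hVDle x y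
        _ < 0 := by have := signlem y hy hyR; linarith
  -- ### Nonnegativity and coercivity of the Lyapunov function.
  have hLkey : ∀ x : ℝ, 0 < x → Istar*Real.log x - Istar*Real.log Istar ≤ x - Istar := by
    intro x hx
    have h1 : Real.log (x/Istar) ≤ x/Istar - 1 := Real.log_le_sub_one_of_pos (div_pos hx hIs0)
    rw [Real.log_div (ne_of_gt hx) (ne_of_gt hIs0)] at h1
    have h2 := mul_le_mul_of_nonneg_left h1 hIs0.le
    have h3 : Istar * (x/Istar - 1) = x - Istar := by field_simp
    nlinarith [h2, h3]
  have hLkey' : ∀ x : ℝ, 0 < x → x ≠ Istar →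
      Istar*Real.log x - Istar*Real.log Istar < x - Istar := by
    intro x hx hne
    have hdne : x/Istar ≠ 1 := by
      intro h
      apply hne
      field_simp at h
      exact h
    have h1 : Real.log (x/Istar) < x/Istar - 1 :=
      Real.log_lt_sub_one_of_pos (div_pos hx hIs0) hdne
    rw [Real.log_div (ne_of_gt hx) (ne_of_gt hIs0)] at h1
    have h2 := mul_lt_mul_of_pos_left h1 hIs0
    have h3 : Istar * (x/Istar - 1) = x - Istar := by field_simp
    nlinarith [h2, h3]
  have hLnonneg : ∀ x : ℝ, 0 < x → 0 ≤ L x := by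
    intro x hx
    have h1 := hLkey x hx
    simp only [hL]
    nlinarith [sq_nonneg (k-1), mul_nonneg (sq_nonneg (k-1)) (by linarith : (0:ℝ) ≤ x - Istar - (Istar*Real.log x - Istar*Real.log Istar))]
  have hLpos : ∀ x : ℝ, 0 < x → x ≠ Istar → 0 < L x := by
    intro x hx hne
    have h1 := hLkey' x hx hne
    simp only [hL]
    have h2 : (0:ℝ) < (k-1)^2 := by positivity
    nlinarith [mul_pos h2 (by linarith : (0:ℝ) < x - Istar - (Istar*Real.log x - Istar*Real.log Istar))]
  have hφRs : φh Rstar = 0 := by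
    have h0 : φh Rstar = f Rstar*((k+1)*(Rstar-Rstar)-(k-1)+k*Rstar)+k*(k-1) := rfl
    rw [h0]; linear_combination -hfsEq
  have hφsign : ∀ y, 0 ≤ y → y ≠ Rstar → 0 < φh y * (y - Rstar) := by
    intro y hy hne
    have h1 := hVDneg Istar y hy (by tauto)
    have h2 : VD Istar y = -(φh y * (y - Rstar)) := by
      rw [hVD, hIstar]; simp only; field_simp; ring
    rw [h2] at h1; linarith
  have hφnn : ∀ s, Rstar ≤ s → 0 ≤ φh s := by
    intro s hs
    rcases eq_or_lt_of_le hs with heq | h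
    · rw [← heq, hφRs]
    · have := hφsign s (le_trans hRs0.le hs) (ne_of_gt h)
      nlinarith
  have hφnp : ∀ s, 0 ≤ s → s ≤ Rstar → φh s ≤ 0 := by
    intro s h0 hs
    rcases eq_or_lt_of_le hs with heq | h
    · rw [heq, hφRs]
    · have := hφsign s h0 (ne_of_lt h)
      nlinarith
  have hΦnonneg : ∀ y, 0 ≤ y → 0 ≤ Φ y := by
    intro y hy
    rcases le_total Rstar y with hcase | hcase
    · simp only [hΦ]
      exact intervalIntegral.integral_nonneg hcase (fun s hs => hφnn s hs.1)
    · simp only [hΦ]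
      rw [intervalIntegral.integral_symm]
      have h2 : 0 ≤ ∫ s in y..Rstar, -φh s :=
        intervalIntegral.integral_nonneg hcase
          (fun s hs => by have := hφnp s (le_trans hy hs.1) hs.2; linarith)
      rw [intervalIntegral.integral_neg] at h2
      linarith
  have hΦpos : ∀ y, 0 ≤ y → y ≠ Rstar → 0 < Φ y := by
    intro y hy hne
    rcases lt_or_gt_of_ne hne with hlt | hgt
    · have hpos : 0 < ∫ s in y..Rstar, -φh s := by
        apply intervalIntegral.integral_pos hlt ((hφcont.neg).continuousOn)
        · intro s hs
          have := hφnp s (le_trans hy hs.1.le) hs.2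
          simp only [Pi.neg_apply]; linarith
        · refine ⟨y, ⟨le_refl y, hlt.le⟩, ?_⟩
          have := hφsign y hy hne
          simp only [Pi.neg_apply]; nlinarith
      simp only [hΦ]
      rw [intervalIntegral.integral_symm]
      rw [intervalIntegral.integral_neg] at hpos
      linarith
    · simp only [hΦ]
      apply intervalIntegral.integral_pos hgt (hφcont.continuousOn)
      · intro s hs
        exact hφnn s hs.1.le
      · refine ⟨y, ⟨hgt.le, le_refl y⟩, ?_⟩
        have := hφsign y hy hne
        nlinarith
  have hLIstar : L Istar = 0 := by rw [hL]; ring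
  have hΦRstar : Φ Rstar = 0 := by rw [hΦ]; simp
  -- ### The Lyapunov function decreases along the flow.
  have hvanti : AntitoneOn v (Set.Ici 0) :=
    antiOn_Ici hvd (fun t ht => hVDnonpos _ _ (hRpos t ht))
  have hvnonneg : ∀ t, 0 ≤ t → 0 ≤ v t := by
    intro t ht
    have := hLnonneg (I t) (hIpos t ht)
    have := hΦnonneg (R t) (hRpos t ht)
    rw [hv]; dsimp only; linarith
  have hvle : ∀ t, 0 ≤ t → v t ≤ v 0 :=
    fun t ht => hvanti (by simp : (0:ℝ) ∈ Set.Ici (0:ℝ)) ht ht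
  -- ### Lower bound on I.
  obtain ⟨Imin, hImin0, hImin⟩ :
      ∃ Imin : ℝ, 0 < Imin ∧ ∀ t, 0 ≤ t → Imin ≤ I t := by
    set M := (v 0 + (k-1)^2*Istar)/((k-1)^2*Istar) with hM
    refine ⟨Istar * Real.exp (-M), by positivity, ?_⟩
    intro t ht
    have hIt := hIpos t ht
    have h1 : L (I t) ≤ v 0 := by
      have h2 := hvle t ht
      have h3 := hΦnonneg (R t) (hRpos t ht)
      simp only [hv] at h2 ⊢
      linarith
    have h4 : Real.log (Istar / I t) ≤ M := by
      have h5 : (k-1)^2*Istar*(Real.log Istar - Real.log (I t)) ≤ v 0 + (k-1)^2*Istar := by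
        simp only [hL] at h1
        nlinarith [hIt, mul_pos (by positivity : (0:ℝ) < (k-1)^2) hIt]
      rw [Real.log_div (ne_of_gt hIs0) (ne_of_gt hIt), hM,
        le_div_iff₀ (by positivity : (0:ℝ) < (k-1)^2*Istar)]
      nlinarith [h5]
    have h6 : Istar / I t ≤ Real.exp M := by
      rw [← Real.exp_log (div_pos hIs0 hIt)]
      exact Real.exp_le_exp.mpr h4
    rw [div_le_iff₀ hIt] at h6
    rw [Real.exp_neg, ← div_eq_mul_inv, div_le_iff₀ (Real.exp_pos M)]
    linarith [h6]
  -- ### v tends to a limit ℓ, and ℓ = 0.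
  have hbox : ∀ t, 0 ≤ t → (I t, R t) ∈ (Icc Imin 1 ×ˢ Icc (0:ℝ) 1) := by
    intro t ht
    exact ⟨⟨hImin t ht, hIle1 t ht⟩, ⟨hRpos t ht, hRle1 t ht⟩⟩
  set vfun : ℝ × ℝ → ℝ := fun p => L p.1 + Φ p.2 with hvfun
  have hΦC : Continuous Φ :=
    Differentiable.continuous (fun y => (hΦd y).differentiableAt)
  have hLC : ContinuousOn L {x : ℝ | 0 < x} := by
    have hlog : ContinuousOn (fun x : ℝ => Real.log x) {x : ℝ | 0 < x} :=
      Real.continuousOn_log.mono (fun x hx => by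
        simp only [Set.mem_compl_iff, Set.mem_singleton_iff]
        exact ne_of_gt hx)
    simp only [hL]
    exact continuousOn_const.mul (((continuousOn_id.sub continuousOn_const).sub
      (continuousOn_const.mul hlog)).add continuousOn_const)
  have hvfunC : ContinuousOn vfun (Icc Imin 1 ×ˢ Icc (0:ℝ) 1) := by
    apply ContinuousOn.add
    · apply hLC.comp continuous_fst.continuousOn
      intro p hp
      exact lt_of_lt_of_le hImin0 hp.1.1
    · exact (hΦC.comp continuous_snd).continuousOn
  -- the limit of v
  set l : ℝ := sInf (v '' Ici 0) with hl
  have hvne : (v '' Ici 0).Nonempty := ⟨v 0, ⟨0, Set.self_mem_Ici, rfl⟩⟩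
  have hbdd : BddBelow (v '' Ici 0) := by
    refine ⟨0, ?_⟩
    rintro x ⟨t, ht, rfl⟩
    exact hvnonneg t ht
  have hl0 : 0 ≤ l := by
    apply le_csInf hvne
    rintro x ⟨t, ht, rfl⟩
    exact hvnonneg t ht
  have hvl : ∀ t, 0 ≤ t → l ≤ v t := fun t ht => csInf_le hbdd ⟨t, ht, rfl⟩
  have htendv : Filter.Tendsto v Filter.atTop (nhds l) := by
    rw [Metric.tendsto_atTop]
    intro ε hε
    obtain ⟨x, ⟨t0, ht0, rfl⟩, hx⟩ := exists_lt_of_csInf_lt hvne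
      (show l < l + ε by linarith)
    refine ⟨t0, fun t ht => ?_⟩
    have ht' : (0:ℝ) ≤ t := le_trans ht0 ht
    have h1 := hvanti (mem_Ici.mpr ht0) (mem_Ici.mpr ht') ht
    have h2 := hvl t ht'
    rw [Real.dist_eq, abs_lt]
    constructor <;> linarith
  have hlzero : l = 0 := by
    by_contra hne0
    have hlpos : 0 < l := lt_of_le_of_ne hl0 (Ne.symm hne0)
    set K := (Icc Imin 1 ×ˢ Icc (0:ℝ) 1) ∩ vfun ⁻¹' (Ici l) with hK
    have hKclosed : IsClosed K :=
      hvfunC.preimage_isClosed_of_isClosed (isClosed_Icc.prod isClosed_Icc) isClosed_Ici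
    have hKcompact : IsCompact K :=
      ((isCompact_Icc).prod isCompact_Icc).of_isClosed_subset hKclosed
        Set.inter_subset_left
    have htrajK : ∀ t, 0 ≤ t → (I t, R t) ∈ K := by
      intro t ht
      refine ⟨hbox t ht, ?_⟩
      have : vfun (I t, R t) = v t := rfl
      simp only [Set.mem_preimage, this, mem_Ici]
      exact hvl t ht
    have hKne : K.Nonempty := ⟨(I 0, R 0), htrajK 0 (le_refl 0)⟩
    have hVDfunC : Continuous (fun p : ℝ × ℝ => VD p.1 p.2) := by
      simp only [hVD]
      apply Continuous.add
      · exact (continuous_const.mul ((continuous_const.mul continuous_fst).sub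
          continuous_const)).mul (((hfC.comp continuous_snd).mul
          ((continuous_const.sub continuous_fst).sub continuous_snd)).sub continuous_const)
      · exact (hφcont.comp continuous_snd).mul
          ((continuous_const.mul continuous_fst).sub continuous_snd)
    obtain ⟨p0, hp0K, hp0max⟩ := hKcompact.exists_isMaxOn hKne hVDfunC.continuousOn
    have hp0neg : VD p0.1 p0.2 < 0 := by
      apply hVDneg _ _ hp0K.1.2.1
      rintro ⟨h1, h2⟩
      have hp0eq : vfun p0 = 0 := by
        have hp0 : p0 = (Istar, Rstar) := Prod.ext h1 h2
        rw [hp0]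
        show L Istar + Φ Rstar = 0
        rw [hLIstar, hΦRstar]; ring
      have h3 := hp0K.2
      simp only [Set.mem_preimage, mem_Ici] at h3
      rw [hp0eq] at h3
      linarith
    set ε := -(VD p0.1 p0.2) with hε
    have hεpos : 0 < ε := by simp only [hε]; linarith
    have hvlin : ∀ t, 0 ≤ t → v t + ε*t ≤ v 0 := by
      have hanti : AntitoneOn (fun u => v u + ε*u) (Set.Ici 0) := by
        apply antiOn_Ici (g := fun s => VD (I s) (R s) + ε*1)
        · intro s hs
          exact (hvd s hs).add ((hasDerivAt_id s).const_mul ε)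
        · intro s hs
          have h3 := hp0max (htrajK s hs)
          have h4 : VD (I s) (R s) ≤ VD p0.1 p0.2 := h3
          simp only [hε]
          linarith
      intro t ht
      have := hanti Set.self_mem_Ici (mem_Ici.mpr ht) ht
      simpa using this
    have hv00 := hvnonneg 0 (le_refl 0)
    set T := (v 0 + 1)/ε with hT
    have hT0 : 0 ≤ T := div_nonneg (by linarith) hεpos.le
    have h5 := hvlin T hT0
    have h6 := hvnonneg T hT0
    have h7 : ε*T = v 0 + 1 := by
      rw [hT]
      field_simp
    linarith
  -- final convergence
  have hkey : ∀ ε : ℝ, 0 < ε → ∃ N : ℝ, ∀ t ≥ N, |I t - Istar| < ε ∧ |R t - Rstar| < ε := by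
    intro ε hε
    set C := (Icc Imin 1 ×ˢ Icc (0:ℝ) 1) ∩
      {p : ℝ × ℝ | ε ≤ |p.1 - Istar| ∨ ε ≤ |p.2 - Rstar|} with hC
    have hCclosed : IsClosed C := by
      apply IsClosed.inter (isClosed_Icc.prod isClosed_Icc)
      apply IsClosed.union
      · exact isClosed_le continuous_const ((continuous_fst.sub continuous_const).abs)
      · exact isClosed_le continuous_const ((continuous_snd.sub continuous_const).abs)
    have hCcompact : IsCompact C :=
      ((isCompact_Icc).prod isCompact_Icc).of_isClosed_subset hCclosed
        Set.inter_subset_left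
    rcases C.eq_empty_or_nonempty with hCe | hCne
    · refine ⟨0, fun t ht => ?_⟩
      by_contra hcon
      push_neg at hcon
      have hmemC : (I t, R t) ∈ C := by
        refine ⟨hbox t ht, ?_⟩
        rcases lt_or_ge (|I t - Istar|) ε with h4 | h4
        · exact Or.inr (hcon h4)
        · exact Or.inl h4
      rw [hCe] at hmemC
      exact hmemC
    · obtain ⟨q, hqC, hqmin⟩ := hCcompact.exists_isMinOn hCne
        (hvfunC.mono Set.inter_subset_left)
      have hq1 : 0 < q.1 := lt_of_lt_of_le hImin0 hqC.1.1.1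
      have hq2 : 0 ≤ q.2 := hqC.1.2.1
      have hLq := hLnonneg _ hq1
      have hΦq := hΦnonneg _ hq2
      have hm0 : 0 < vfun q := by
        have h1 : 0 ≤ vfun q := add_nonneg hLq hΦq
        rcases eq_or_lt_of_le h1 with heq | h
        · exfalso
          have hvq : vfun q = L q.1 + Φ q.2 := rfl
          have hL0 : L q.1 = 0 := by rw [hvq] at heq; linarith
          have hΦ0 : Φ q.2 = 0 := by rw [hvq] at heq; linarith
          have hq1I : q.1 = Istar := by
            by_contra hne1
            exact absurd hL0 (ne_of_gt (hLpos _ hq1 hne1))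
          have hq2R : q.2 = Rstar := by
            by_contra hne2
            exact absurd hΦ0 (ne_of_gt (hΦpos _ hq2 hne2))
          rcases hqC.2 with hc | hc
          · rw [hq1I] at hc; simp only [sub_self, abs_zero] at hc; linarith
          · rw [hq2R] at hc; simp only [sub_self, abs_zero] at hc; linarith
        · exact h
      rw [hlzero] at htendv
      obtain ⟨N, hN⟩ := (Metric.tendsto_atTop.mp htendv) (vfun q) hm0
      refine ⟨max N 0, fun t ht => ?_⟩
      have htN : N ≤ t := le_trans (le_max_left _ _) ht
      have ht0 : (0:ℝ) ≤ t := le_trans (le_max_right _ _) ht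
      have h2 := hN t htN
      rw [Real.dist_eq, sub_zero] at h2
      have h3 : v t < vfun q := by
        have h4 := hvnonneg t ht0
        rw [abs_of_nonneg h4] at h2
        exact h2
      by_contra hcon
      push_neg at hcon
      have hmemC : (I t, R t) ∈ C := by
        refine ⟨hbox t ht0, ?_⟩
        rcases lt_or_ge (|I t - Istar|) ε with h4 | h4
        · exact Or.inr (hcon h4)
        · exact Or.inl h4
      have h5 : vfun q ≤ vfun (I t, R t) := hqmin hmemC
      have h6 : vfun (I t, R t) = v t := rfl
      rw [h6] at h5
      linarith
  have hTI : Filter.Tendsto I Filter.atTop (nhds Istar) := by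
    rw [Metric.tendsto_atTop]
    intro ε hε
    obtain ⟨N, hN⟩ := hkey ε hε
    exact ⟨N, fun t ht => by rw [Real.dist_eq]; exact (hN t ht).1⟩
  have hTR : Filter.Tendsto R Filter.atTop (nhds Rstar) := by
    rw [Metric.tendsto_atTop]
    intro ε hε
    obtain ⟨N, hN⟩ := hkey ε hε
    exact ⟨N, fun t ht => by rw [Real.dist_eq]; exact (hN t ht).2⟩
  exact hTI.prodMk_nhds hTR
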